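/- Let q ≥ 2, θ ∈ ℝ, and T(N) := (1/N) Σ_{n=0}^{N−1} exp(2πi · s_q(n) · θ). If N has q-adic expansion N = Σ_{r=0}^R a_r q^r with digits a_r ∈ {0,…,q−1}, then N·|T(N)| ≤ Σ_{r=0}^R a_r q^r |T(q^r)|. -/

import Mathlib

open Finset Real

/-- `T(N) = (1/N) Σ_{n=0}^{N−1} exp(2πi · s_q(n) · θ)`, where `s_q` is the `q`-ary
sum-of-digits function. -/
noncomputable def Tsod (q : ℕ) (θ : ℝ) (N : ℕ) : ℂ :=
  (N : ℂ)⁻¹ * ∑ n ∈ Finset.range N,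
    Complex.exp (2 * Real.pi * Complex.I * ((Nat.digits q n).sum : ℂ) * (θ : ℂ))

namespace TsodAux

noncomputable def F (q : ℕ) (θ : ℝ) (n : ℕ) : ℂ :=
  Complex.exp (2 * Real.pi * Complex.I * ((Nat.digits q n).sum : ℂ) * (θ : ℂ))

lemma abs_F (q : ℕ) (θ : ℝ) (n : ℕ) : ‖F q θ n‖ = 1 := by
  unfold F
  generalize (Nat.digits q n).sum = s
  have h : 2 * (Real.pi : ℂ) * Complex.I * ((s : ℕ) : ℂ) * (θ : ℂ)
      = ((2 * Real.pi * (s : ℝ) * θ : ℝ) : ℂ) * Complex.I := by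
    push_cast; ring
  rw [h, Complex.norm_exp_ofReal_mul_I]

lemma sum_digits_add (q : ℕ) (hq : 2 ≤ q) (k m n : ℕ) (hn : n < q ^ k) :
    (Nat.digits q (n + q ^ k * m)).sum
      = (Nat.digits q n).sum + (Nat.digits q m).sum := by
  rcases Nat.eq_zero_or_pos m with rfl | hm
  · simp
  have hb : 1 < q := hq
  have hlen : (Nat.digits q n).length ≤ k := by
    rcases Nat.eq_zero_or_pos n with rfl | hn0
    · simp
    rw [Nat.digits_len q n hb hn0.ne']
    have : Nat.log q n < k := Nat.log_lt_of_lt_pow hn0.ne' hn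
    omega
  obtain ⟨j, hj⟩ := Nat.exists_eq_add_of_le hlen
  have := Nat.digits_append_zeroes_append_digits (b := q) (k := j) (m := m) (n := n) hb hm
  rw [← hj] at this
  rw [show n + q ^ k * m = n + q ^ k * m from rfl, ← this]
  simp

lemma F_mul (q : ℕ) (hq : 2 ≤ q) (k m n : ℕ) (hn : n < q ^ k) :
    F q θ (n + q ^ k * m) = F q θ n * F q θ m := by
  unfold F
  rw [← Complex.exp_add, sum_digits_add q hq k m n hn]
  push_cast
  ring_nf

lemma abs_sum_block (q : ℕ) (hq : 2 ≤ q) (θ : ℝ) (k m c : ℕ) (hc : c ≤ q ^ k) :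
    ‖∑ n ∈ Finset.range c, F q θ (q ^ k * m + n)‖
      = ‖∑ n ∈ Finset.range c, F q θ n‖ := by
  have : ∀ n ∈ Finset.range c, F q θ (q ^ k * m + n) = F q θ m * F q θ n := by
    intro n hn
    rw [add_comm, F_mul q hq k m n (lt_of_lt_of_le (Finset.mem_range.mp hn) hc)]
    ring
  rw [Finset.sum_congr rfl this, ← Finset.mul_sum, norm_mul, abs_F, one_mul]

lemma abs_sum_mul_pow (q : ℕ) (hq : 2 ≤ q) (θ : ℝ) (k a : ℕ) :
    ‖∑ n ∈ Finset.range (a * q ^ k), F q θ n‖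
      ≤ a * ‖∑ n ∈ Finset.range (q ^ k), F q θ n‖ := by
  induction a with
  | zero => simp
  | succ a ih =>
    rw [add_mul, one_mul, Finset.sum_range_add]
    refine le_trans (norm_add_le _ _) ?_
    have h2 : ‖∑ n ∈ Finset.range (q ^ k), F q θ (a * q ^ k + n)‖
        = ‖∑ n ∈ Finset.range (q ^ k), F q θ n‖ := by
      rw [show a * q ^ k = q ^ k * a by ring]
      exact abs_sum_block q hq θ k a (q ^ k) le_rfl
    rw [h2]
    push_cast
    nlinarith [ih]

lemma digit_sum_lt (q : ℕ) (hq : 2 ≤ q) (R : ℕ) (a : ℕ → ℕ) (ha : ∀ r ≤ R, a r < q) :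
    ∑ r ∈ Finset.range (R + 1), a r * q ^ r < q ^ (R + 1) := by
  induction R with
  | zero => simpa using ha 0 le_rfl
  | succ R ih =>
    rw [Finset.sum_range_succ]
    have h1 : ∑ r ∈ Finset.range (R + 1), a r * q ^ r < q ^ (R + 1) :=
      ih (fun r hr => ha r (le_trans hr (Nat.le_succ R)))
    have h2 : a (R + 1) ≤ q - 1 := by have := ha (R + 1) le_rfl; omega
    have h3 : a (R + 1) * q ^ (R + 1) ≤ (q - 1) * q ^ (R + 1) :=
      Nat.mul_le_mul_right _ h2
    have h4 : (q - 1) * q ^ (R + 1) + q ^ (R + 1) = q ^ (R + 1 + 1) := by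
      have hx : q ^ (R + 1) ≤ q * q ^ (R + 1) := Nat.le_mul_of_pos_left _ (by omega)
      rw [Nat.sub_one_mul, pow_succ' q (R + 1)]
      omega
    omega

lemma key (q : ℕ) (hq : 2 ≤ q) (θ : ℝ) (R : ℕ) (a : ℕ → ℕ) (ha : ∀ r ≤ R, a r < q) :
    ‖∑ n ∈ Finset.range (∑ r ∈ Finset.range (R + 1), a r * q ^ r), F q θ n‖
      ≤ ∑ r ∈ Finset.range (R + 1),
          (a r : ℝ) * ‖∑ n ∈ Finset.range (q ^ r), F q θ n‖ := by
  induction R generalizing a with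
  | zero =>
    simp only [zero_add, Finset.sum_range_one, pow_zero, mul_one]
    calc ‖∑ n ∈ Finset.range (a 0), F q θ n‖
        ≤ ∑ n ∈ Finset.range (a 0), ‖F q θ n‖ :=
          norm_sum_le _ _
      _ = a 0 := by simp [abs_F]
      _ = (a 0 : ℝ) * ‖F q θ 0‖ := by rw [abs_F, mul_one]
  | succ R ih =>
    have haR : ∀ r ≤ R, a r < q := fun r hr => ha r (le_trans hr (Nat.le_succ R))
    set M := ∑ r ∈ Finset.range (R + 1), a r * q ^ r with hM
    have hMlt : M < q ^ (R + 1) := digit_sum_lt q hq R a haR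
    rw [Finset.sum_range_succ (f := fun r => a r * q ^ r)]
    rw [add_comm M (a (R + 1) * q ^ (R + 1)), Finset.sum_range_add]
    refine le_trans (norm_add_le _ _) ?_
    rw [Finset.sum_range_succ]
    have h1 := abs_sum_mul_pow q hq θ (R + 1) (a (R + 1))
    have h2 : ‖∑ n ∈ Finset.range M, F q θ (a (R + 1) * q ^ (R + 1) + n)‖
        = ‖∑ n ∈ Finset.range M, F q θ n‖ := by
      rw [show a (R + 1) * q ^ (R + 1) = q ^ (R + 1) * a (R + 1) by ring]
      exact abs_sum_block q hq θ (R + 1) (a (R + 1)) M hMlt.le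
    rw [h2]
    have h3 := ih a haR
    linarith

end TsodAux

/-- If `N = Σ_{r=0}^R a_r q^r` with digits `a_r ∈ {0,…,q−1}`, then
`N·|T(N)| ≤ Σ_{r=0}^R a_r q^r |T(q^r)|`. -/
theorem Tsod_digit_bound (q : ℕ) (hq : 2 ≤ q) (θ : ℝ) (R : ℕ) (a : ℕ → ℕ)
    (ha : ∀ r ≤ R, a r < q) (N : ℕ)
    (hN : N = ∑ r ∈ Finset.range (R + 1), a r * q ^ r) :
    (N : ℝ) * ‖Tsod q θ N‖ ≤
      ∑ r ∈ Finset.range (R + 1),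
        (a r : ℝ) * (q : ℝ) ^ r * ‖Tsod q θ (q ^ r)‖ := by
  have hq0 : (0:ℕ) < q := by omega
  have habs : ∀ M : ℕ, (M : ℝ) * ‖Tsod q θ M‖
      = ‖∑ n ∈ Finset.range M, TsodAux.F q θ n‖ := by
    intro M
    rcases Nat.eq_zero_or_pos M with rfl | hM
    · simp
    unfold Tsod TsodAux.F
    rw [norm_mul, norm_inv, Complex.norm_natCast]
    field_simp
    congr 1
    refine Finset.sum_congr rfl fun x _ => ?_
    ring_nf
  rw [habs N, hN]
  have := TsodAux.key q hq θ R a ha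
  refine le_trans this (le_of_eq ?_)
  refine Finset.sum_congr rfl fun r _ => ?_
  rw [mul_assoc, ← habs (q ^ r)]
  push_cast
  ring
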